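/- For every task (p, σ) over ℕ (with σ valued in [0,1]), every performance level α : ℝ, and every m : ℕ, the unconditional task complexity is finite if and only if the conditional task complexity is finite: K_{p,σ}(α) < ⊤ ↔ K_{p,σ}(α ∣ m) < ⊤ (in ℕ∞). -/

import Mathlib

/-- Program length: the size in bits of the encoding of a partial recursive code. -/
def progLen (c : Nat.Partrec.Code) : ℕ := Nat.size (Encodable.encode c)

open Classical in
/-- Score of a single (possibly undefined) output `o` on input `x` under scoring function `σ`:
`σ x y` if `o = Part.some y`, and `0` if `o` is the undefined computation. -/
noncomputable def outScore (σ : ℕ → ℕ → ℝ) (x : ℕ) (o : Part ℕ) : ℝ :=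
  if h : o.Dom then σ x (o.get h) else 0

/-- Score of a code `c` on the task `(p, σ)`. -/
noncomputable def score (p : PMF ℕ) (σ : ℕ → ℕ → ℝ) (c : Nat.Partrec.Code) : ℝ :=
  ∑' x : ℕ, (p x).toReal * outScore σ x (c.eval x)

/-- Conditional score of a code `c` on the task `(p, σ)`, conditioned on `m`. -/
noncomputable def condScore (p : PMF ℕ) (σ : ℕ → ℕ → ℝ) (c : Nat.Partrec.Code) (m : ℕ) : ℝ :=
  ∑' x : ℕ, (p x).toReal * outScore σ x (c.eval (Nat.pair m x))

/-- Task complexity at performance `α`. -/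
noncomputable def taskComplexity (p : PMF ℕ) (σ : ℕ → ℕ → ℝ) (α : ℝ) : ℕ∞ :=
  sInf { n : ℕ∞ | ∃ c : Nat.Partrec.Code, score p σ c ≥ α ∧ n = (progLen c : ℕ∞) }

/-- Conditional task complexity at performance `α`, conditioned on `m`. -/
noncomputable def condTaskComplexity (p : PMF ℕ) (σ : ℕ → ℕ → ℝ) (α : ℝ) (m : ℕ) : ℕ∞ :=
  sInf { n : ℕ∞ | ∃ c : Nat.Partrec.Code, condScore p σ c m ≥ α ∧ n = (progLen c : ℕ∞) }

/-- Kolmogorov complexity of a natural number `s`. -/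
noncomputable def kolmogorov (s : ℕ) : ℕ∞ :=
  sInf { n : ℕ∞ | ∃ c : Nat.Partrec.Code, c.eval 0 = Part.some s ∧ n = (progLen c : ℕ∞) }


lemma sInf_lt_top_iff_aux {S : Set ℕ∞} (h : ∀ n ∈ S, n < ⊤) : sInf S < ⊤ ↔ S.Nonempty := by
  constructor
  · intro h'
    by_contra hne
    rw [Set.not_nonempty_iff_eq_empty] at hne
    simp [hne] at h'
  · rintro ⟨n, hn⟩
    exact lt_of_le_of_lt (sInf_le hn) (h n hn)

/-- Unconditional task complexity is finite iff conditional task complexity is finite. -/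
theorem taskComplexity_lt_top_iff_condTaskComplexity_lt_top (p : PMF ℕ) (σ : ℕ → ℕ → ℝ)
    (hσ : ∀ x y, 0 ≤ σ x y ∧ σ x y ≤ 1) (α : ℝ) (m : ℕ) :
    taskComplexity p σ α < ⊤ ↔ condTaskComplexity p σ α m < ⊤ := by
  have key : (∃ c : Nat.Partrec.Code, score p σ c ≥ α) ↔
      (∃ c : Nat.Partrec.Code, condScore p σ c m ≥ α) := by
    constructor
    · rintro ⟨c, hc⟩
      refine ⟨c.comp .right, ?_⟩
      have : condScore p σ (c.comp .right) m = score p σ c := by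
        unfold condScore score
        congr 1; funext x
        simp [Nat.Partrec.Code.eval, Part.bind_eq_bind]
        exact Or.inl (congrArg _ (Part.bind_some x c.eval))
      rwa [this]
    · rintro ⟨c, hc⟩
      have hpar : Partrec (fun n => c.eval (Nat.pair m n)) := by
        have h1 : Partrec c.eval :=
          Partrec.nat_iff.2 (Nat.Partrec.Code.exists_code.2 ⟨c, rfl⟩)
        exact h1.comp ((Primrec₂.natPair.comp (Primrec.const m) Primrec.id).to_comp)
      obtain ⟨c', hc'⟩ := Nat.Partrec.Code.exists_code.1 (Partrec.nat_iff.1 hpar)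
      refine ⟨c', ?_⟩
      have : score p σ c' = condScore p σ c m := by
        unfold condScore score
        congr 1; funext x
        rw [hc']
      rwa [this]
  unfold taskComplexity condTaskComplexity
  rw [sInf_lt_top_iff_aux (by rintro n ⟨c, -, rfl⟩; exact ENat.coe_lt_top _),
      sInf_lt_top_iff_aux (by rintro n ⟨c, -, rfl⟩; exact ENat.coe_lt_top _)]
  constructor
  · rintro ⟨n, c, hc, rfl⟩
    obtain ⟨c', hc'⟩ := key.1 ⟨c, hc⟩
    exact ⟨_, c', hc', rfl⟩
  · rintro ⟨n, c, hc, rfl⟩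
    obtain ⟨c', hc'⟩ := key.2 ⟨c, hc⟩
    exact ⟨_, c', hc', rfl⟩
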